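/- Let k ≥ 2 and h : ZMod k → ℕ with h v ≥ 2 for every v. The Latvian game on the directed cycle on ZMod k is winnable if and only if h v = 2 for every vertex v. -/

import Mathlib

/-- A Czech hat game on the digraph with adjacency `D` (sage `v` sees sage `u`
iff `D v u`), guessness `g`, and hatness `h`, is winnable: there is a strategy
assigning to each sage `v` a set of `g v` guesses, depending only on the hats
she sees, such that for every coloring some sage guesses her own hat color. -/
def HatGame.Winnable {V : Type*} (D : V → V → Prop) (g h : V → ℕ) : Prop :=
  ∃ F : ∀ v : V, (∀ u : V, Fin (h u)) → Finset (Fin (h v)),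
    (∀ (v : V) (c c' : ∀ u : V, Fin (h u)),
        (∀ u : V, D v u → c u = c' u) → F v c = F v c') ∧
    (∀ (v : V) (c : ∀ u : V, Fin (h u)), (F v c).card = g v) ∧
    (∀ c : ∀ u : V, Fin (h u), ∃ v : V, c v ∈ F v c)

open Fin.NatCast in
lemma two_cycle_winnable (k : ℕ) (hk : 2 ≤ k) :
    ∃ F : ∀ v : ZMod k, (∀ u : ZMod k, Fin 2) → Finset (Fin 2),
      (∀ (v : ZMod k) (c c' : ∀ u : ZMod k, Fin 2),
          (∀ u : ZMod k, u = v + 1 → c u = c' u) → F v c = F v c') ∧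
      (∀ (v : ZMod k) (c : ∀ u : ZMod k, Fin 2), (F v c).card = 1) ∧
      (∀ c : ∀ u : ZMod k, Fin 2, ∃ v : ZMod k, c v ∈ F v c) := by
  haveI : NeZero k := ⟨by omega⟩
  refine ⟨fun v c => {(if v = 0 then (k : Fin 2) + 1 else 0) - c (v + 1)}, ?_, fun _ _ => rfl, ?_⟩
  · intro v c c' hcc
    simp only [hcc (v + 1) rfl]
  · intro c
    by_contra hno
    push_neg at hno
    have key : ∀ v : ZMod k,
        c v + c (v + 1) = (if v = 0 then (k : Fin 2) + 1 else 0) + 1 := by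
      intro v
      have hv := hno v
      simp only [Finset.mem_singleton] at hv
      revert hv
      generalize c v = z; generalize c (v+1) = y
      generalize (if v = 0 then (k : Fin 2) + 1 else 0) = s
      revert z y s; decide
    have HL : ∑ v : ZMod k, (c v + c (v + 1)) =
        ∑ v : ZMod k, ((if v = 0 then (k : Fin 2) + 1 else 0) + 1) :=
      Finset.sum_congr rfl fun v _ => key v
    rw [Finset.sum_add_distrib, Finset.sum_add_distrib] at HL
    have e1 : ∑ v : ZMod k, c (v + 1) = ∑ v : ZMod k, c v :=
      Fintype.sum_equiv (Equiv.addRight (1 : ZMod k)) _ _ (fun v => rfl)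
    rw [e1] at HL
    have e2 : ∑ v : ZMod k, c v + ∑ v : ZMod k, c v = 0 := by
      generalize (∑ v : ZMod k, c v) = a; revert a; decide
    have e3 : ∑ v : ZMod k, (if v = 0 then (k : Fin 2) + 1 else 0) = (k : Fin 2) + 1 := by
      rw [Finset.sum_ite_eq' Finset.univ (0 : ZMod k) (fun _ => (k : Fin 2) + 1)]
      simp
    have e4 : ∑ _v : ZMod k, (1 : Fin 2) = (k : Fin 2) := by
      rw [Finset.sum_const, Finset.card_univ, ZMod.card]
      exact nsmul_one k
    rw [e2, e3, e4] at HL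
    revert HL
    generalize (k : Fin 2) = K
    revert K; decide

lemma forced_two (k : ℕ) (hk : 2 ≤ k) (h : ZMod k → ℕ) (hh : ∀ v, 2 ≤ h v)
    (F : ∀ v : ZMod k, (∀ u : ZMod k, Fin (h u)) → Finset (Fin (h v)))
    (hdep : ∀ (v : ZMod k) (c c' : ∀ u : ZMod k, Fin (h u)),
        (∀ u : ZMod k, u = v + 1 → c u = c' u) → F v c = F v c')
    (hcard : ∀ (v : ZMod k) (c : ∀ u : ZMod k, Fin (h u)), (F v c).card = 1)
    (hwin : ∀ c : ∀ u : ZMod k, Fin (h u), ∃ v : ZMod k, c v ∈ F v c)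
    (w : ZMod k) : h w = 2 := by
  classical
  haveI : NeZero k := ⟨by omega⟩
  -- cast injectivity on [0,k)
  have hcast : ∀ {i j : ℕ}, i < k → j < k → (i : ZMod k) = (j : ZMod k) → i = j := by
    intro i j hi hj e
    have := congrArg ZMod.val e
    rwa [ZMod.val_cast_of_lt hi, ZMod.val_cast_of_lt hj] at this
  have hone : (1 : ZMod k) ≠ 0 := by
    intro e
    have : (1 : ℕ) = (0 : ℕ) := hcast (by omega) (by omega) (by push_cast; exact e)
    omega
  set d : ∀ u : ZMod k, Fin (h u) := fun u => ⟨0, by have := hh u; omega⟩ with hd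
  -- Good x p c : c w = x and all sages at w + j, p ≤ j < k, guess wrong
  set Good : Fin (h w) → ℕ → (∀ u : ZMod k, Fin (h u)) → Prop :=
    fun x p c => c w = x ∧ ∀ j : ℕ, p ≤ j → j < k →
      c (w + (j : ZMod k)) ∉ F (w + (j : ZMod k)) c with hGood
  -- step lemma
  have step : ∀ (x : Fin (h w)) (p : ℕ) (c : ∀ u : ZMod k, Fin (h u)), 1 ≤ p → p < k →
      Good x (p + 1) c → ∀ y : Fin (h (w + (p : ZMod k))),
      y ∉ F (w + (p : ZMod k)) c →
      Good x p (Function.update c (w + (p : ZMod k)) y) := by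
    intro x p c hp1 hpk ⟨hcw, hcj⟩ y hy
    have hne0 : w ≠ w + (p : ZMod k) := by
      intro e
      have : (p : ZMod k) = ((0 : ℕ) : ZMod k) := by
        push_cast
        exact (left_eq_add.mp e)
      exact absurd (hcast hpk (by omega) this) (by omega)
    have hsucc : ∀ j : ℕ, p ≤ j → j < k →
        w + (j : ZMod k) + 1 ≠ w + (p : ZMod k) := by
      intro j hpj hjk e
      have e' : ((j + 1 : ℕ) : ZMod k) = (p : ZMod k) := by
        push_cast
        rw [add_assoc] at e
        exact add_left_cancel e
      rcases Nat.lt_or_ge (j + 1) k with hlt | hge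
      · have := hcast hlt hpk e'
        omega
      · have hjk1 : j + 1 = k := by omega
        rw [hjk1, ZMod.natCast_self] at e'
        have : (0 : ℕ) = p := hcast (by omega) hpk (by push_cast; exact e'.symm ▸ rfl)
        omega
    constructor
    · rw [Function.update_of_ne hne0, hcw]
    · intro j hpj hjk
      by_cases hjp : j = p
      · subst hjp
        rw [Function.update_self]
        have : F (w + (j : ZMod k)) (Function.update c (w + (j : ZMod k)) y)
            = F (w + (j : ZMod k)) c := by
          apply hdep
          intro u hu
          subst hu
          exact Function.update_of_ne (hsucc j le_rfl hjk) _ _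
        rw [this]
        exact hy
      · have hne1 : w + (j : ZMod k) ≠ w + (p : ZMod k) := by
          intro e
          exact hjp (hcast hjk hpk (add_left_cancel e))
        rw [Function.update_of_ne hne1]
        have : F (w + (j : ZMod k)) (Function.update c (w + (p : ZMod k)) y)
            = F (w + (j : ZMod k)) c := by
          apply hdep
          intro u hu
          subst hu
          exact Function.update_of_ne (hsucc j (by omega) hjk) _ _
        rw [this]
        exact hcj j (by omega) hjk
  -- chain lemma
  have chain : ∀ (x : Fin (h w)) (m : ℕ), m ≤ k - 1 → ∃ c, Good x (k - m) c := by
    intro x m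
    induction m with
    | zero =>
      intro _
      refine ⟨Function.update d w x, Function.update_self _ _ _, ?_⟩
      intro j hpj hjk
      omega
    | succ m ih =>
      intro hm
      obtain ⟨c, hc⟩ := ih (by omega)
      set p := k - (m + 1) with hp
      have hp1 : 1 ≤ p := by omega
      have hpk : p < k := by omega
      have hpm : k - m = p + 1 := by omega
      rw [hpm] at hc
      have hex : ∃ y : Fin (h (w + (p : ZMod k))), y ∉ F (w + (p : ZMod k)) c := by
        have hne : ((F (w + (p : ZMod k)) c)ᶜ : Finset _).Nonempty := by
          rw [← Finset.card_pos, Finset.card_compl, hcard, Fintype.card_fin]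
          have := hh (w + (p : ZMod k)); omega
        obtain ⟨y, hy⟩ := hne
        exact ⟨y, Finset.mem_compl.mp hy⟩
      obtain ⟨y, hy⟩ := hex
      exact ⟨_, step x p c hp1 hpk hc y hy⟩
  -- if c is good at level 1, vertex w is the only winner, so F w c = {c w} = {x}
  have hW : ∀ (x : Fin (h w)) (c : ∀ u : ZMod k, Fin (h u)), Good x 1 c → F w c = {x} := by
    intro x c hc
    obtain ⟨hcw, hcj⟩ := hc
    obtain ⟨v, hv⟩ := hwin c
    have hvw : v = w := by
      by_contra hne
      have h0 : v - w ≠ 0 := sub_ne_zero.mpr hne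
      set j := (v - w).val with hj
      have hj1 : 1 ≤ j := by
        rcases Nat.eq_zero_or_pos j with h0' | h1
        · exact absurd ((ZMod.val_eq_zero _).mp h0') h0
        · omega
      have hjk : j < k := ZMod.val_lt _
      have hvv : w + (j : ZMod k) = v := by
        rw [hj, ZMod.natCast_val, ZMod.cast_id]
        ring
      rw [← hvv] at hv
      exact hcj j hj1 hjk hv
    rw [hvw] at hv
    obtain ⟨a, ha⟩ := Finset.card_eq_one.mp (hcard w c)
    rw [ha, hcw] at hv
    rw [ha, Finset.mem_singleton.mp hv]
  -- achievable values at w + 1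
  set A1 : Fin (h w) → Finset (Fin (h (w + 1))) :=
    fun x => Finset.univ.filter (fun y => ∃ c, Good x 1 c ∧ c (w + 1) = y) with hA1
  -- each A1 x has at least h (w+1) - 1 elements
  have hbig : ∀ x : Fin (h w), h (w + 1) - 1 ≤ (A1 x).card := by
    intro x
    obtain ⟨c, hc⟩ := chain x (k - 2) (by omega)
    have h2 : k - (k - 2) = 2 := by omega
    rw [h2] at hc
    have hcast1 : ((1 : ℕ) : ZMod k) = (1 : ZMod k) := by push_cast; rfl
    have hsub : ((F (w + 1) c)ᶜ : Finset _) ⊆ A1 x := by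
      intro y hy
      have hy' : y ∉ F (w + 1) c := Finset.mem_compl.mp hy
      have hg : Good x 1 (Function.update c (w + 1) y) := by
        have := step x 1 c le_rfl (by omega)
          (by rw [show (1:ℕ)+1 = 2 from rfl]; exact hc)
        rw [hcast1] at this
        exact this y hy'
      rw [hA1]
      simp only [Finset.mem_filter, Finset.mem_univ, true_and]
      exact ⟨_, hg, Function.update_self _ _ _⟩
    calc h (w + 1) - 1 = ((F (w + 1) c)ᶜ : Finset _).card := by
          rw [Finset.card_compl, hcard, Fintype.card_fin]
      _ ≤ (A1 x).card := Finset.card_le_card hsub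
  -- the A1 x are pairwise disjoint
  have hdisj : ∀ x ∈ (Finset.univ : Finset (Fin (h w))), ∀ x' ∈ Finset.univ,
      x ≠ x' → Disjoint (A1 x) (A1 x') := by
    intro x _ x' _ hne
    rw [Finset.disjoint_left]
    intro y hy hy'
    rw [hA1] at hy hy'
    simp only [Finset.mem_filter, Finset.mem_univ, true_and] at hy hy'
    obtain ⟨c, hc, hcy⟩ := hy
    obtain ⟨c', hc', hcy'⟩ := hy'
    have hFF : F w c = F w c' := by
      apply hdep
      intro u hu
      subst hu
      rw [hcy, hcy']
    rw [hW x c hc, hW x' c' hc'] at hFF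
    exact hne (Finset.singleton_injective hFF)
  -- pigeonhole
  have key : h w * (h (w + 1) - 1) ≤ h (w + 1) := by
    calc h w * (h (w + 1) - 1)
        = ∑ _x : Fin (h w), (h (w + 1) - 1) := by
          rw [Finset.sum_const, Finset.card_univ, Fintype.card_fin, smul_eq_mul]
      _ ≤ ∑ x : Fin (h w), (A1 x).card := Finset.sum_le_sum (fun x _ => hbig x)
      _ = (Finset.univ.biUnion A1).card := (Finset.card_biUnion hdisj).symm
      _ ≤ Fintype.card (Fin (h (w + 1))) := by
          rw [← Finset.card_univ]
          exact Finset.card_le_card (Finset.subset_univ _)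
      _ = h (w + 1) := Fintype.card_fin _
  have ha := hh w
  have hb := hh (w + 1)
  have h1 : 2 * (h (w + 1) - 1) ≤ h (w + 1) :=
    le_trans (Nat.mul_le_mul_right _ ha) key
  have hb2 : h (w + 1) = 2 := by omega
  rw [hb2] at key
  omega

/-- A Latvian game on a directed cycle is winnable iff every hatness is 2. -/
theorem latvian_directed_cycle_winnable_iff (k : ℕ) (hk : 2 ≤ k)
    (h : ZMod k → ℕ) (hh : ∀ v, 2 ≤ h v) :
    HatGame.Winnable (fun i j : ZMod k => j = i + 1) (fun _ => 1) h ↔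
      ∀ v : ZMod k, h v = 2 := by
  constructor
  · rintro ⟨F, hdep, hcard, hwin⟩ v
    exact forced_two k hk h hh F hdep hcard hwin v
  · intro h2
    obtain rfl : h = fun _ => 2 := funext h2
    exact two_cycle_winnable k hk
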